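/- arXiv:1804.02878 — 2 statements merged into one kernel-verified Lean document; each statement's English description precedes it below -/
import Mathlib

section
/- Let K_dc ∈ ℝ^{2×2} be symmetric positive definite, L_dc ∈ ℝ^{2×1}, and α > 0, ν > 0 be such that the observer LMI holds. Then every differentiable function e : ℝ → ℝ² satisfying e'(t) = (A_dc − K_dc⁻¹ L_dc C_dc) e(t) for all t ≥ 0 obeys the exponential bound ‖e(t)‖ ≤ √(λ_max(K_dc)/λ_min(K_dc)) · e^{−α t} · ‖e(0)‖ for all t ≥ 0, where λ_min(K_dc) and λ_max(K_dc) denote the smallest and largest eigenvalues of K_dc. -/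
open Matrix

noncomputable section

/-- The fixed matrix `A_dc = [[0,1],[0,0]]`. -/
def Adc : Matrix (Fin 2) (Fin 2) ℝ := !![0, 1; 0, 0]

/-- The fixed matrix `B_ξ = [0,1]ᵀ`. -/
def Bxi : Matrix (Fin 2) (Fin 1) ℝ := !![0; 1]

/-- The fixed matrix `C_dc = [1,0]`. -/
def Cdc : Matrix (Fin 1) (Fin 2) ℝ := !![1, 0]

/-- A real matrix is negative definite if its negation is positive definite. -/
def NegDef {n : Type*} [Fintype n] (M : Matrix n n ℝ) : Prop := (-M).PosDef

/-- The observer LMI: `[[Φ, K_dc B_ξ],[B_ξᵀ K_dc, −ν]] < 0` with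
`Φ = A_dcᵀK_dc + K_dcA_dc − C_dcᵀL_dcᵀ − L_dcC_dc + C_dcᵀC_dc + 2αK_dc`. -/
def ObserverLMI (Kdc : Matrix (Fin 2) (Fin 2) ℝ) (Ldc : Matrix (Fin 2) (Fin 1) ℝ)
    (α ν : ℝ) : Prop :=
  NegDef (Matrix.fromBlocks
    (Adcᵀ * Kdc + Kdc * Adc - Cdcᵀ * Ldcᵀ - Ldc * Cdc + Cdcᵀ * Cdc + (2 * α) • Kdc)
    (Kdc * Bxi) (Bxiᵀ * Kdc) (-ν • (1 : Matrix (Fin 1) (Fin 1) ℝ)))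

lemma key_quad (Kdc : Matrix (Fin 2) (Fin 2) ℝ) (hK : Kdc.PosDef)
    (Ldc : Matrix (Fin 2) (Fin 1) ℝ) (α ν : ℝ)
    (hLMI : ObserverLMI Kdc Ldc α ν) (x : Fin 2 → ℝ) :
    x ⬝ᵥ (((Adc - Kdc⁻¹ * Ldc * Cdc)ᵀ * Kdc + Kdc * (Adc - Kdc⁻¹ * Ldc * Cdc)) *ᵥ x)
      ≤ -(2*α) * (x ⬝ᵥ (Kdc *ᵥ x)) := by
  have hdet : IsUnit Kdc.det := isUnit_iff_ne_zero.2 hK.det_pos.ne'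
  have hKi : Kdc * Kdc⁻¹ = 1 := Matrix.mul_nonsing_inv _ hdet
  have hiK : Kdc⁻¹ * Kdc = 1 := Matrix.nonsing_inv_mul _ hdet
  have hKt : Kdcᵀ = Kdc := by
    rw [← Matrix.conjTranspose_eq_transpose_of_trivial]; exact hK.isHermitian
  have hKit : (Kdc⁻¹)ᵀ = Kdc⁻¹ := by rw [Matrix.transpose_nonsing_inv, hKt]
  have h1 : Kdc * (Kdc⁻¹ * Ldc * Cdc) = Ldc * Cdc := by
    rw [← Matrix.mul_assoc, ← Matrix.mul_assoc, hKi, Matrix.one_mul]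
  have h2 : (Kdc⁻¹ * Ldc * Cdc)ᵀ * Kdc = Cdcᵀ * Ldcᵀ := by
    rw [Matrix.transpose_mul, Matrix.transpose_mul, hKit, Matrix.mul_assoc,
      Matrix.mul_assoc, hiK, Matrix.mul_one]
  have hid : (Adc - Kdc⁻¹ * Ldc * Cdc)ᵀ * Kdc + Kdc * (Adc - Kdc⁻¹ * Ldc * Cdc)
      = (Adcᵀ * Kdc + Kdc * Adc - Cdcᵀ * Ldcᵀ - Ldc * Cdc + Cdcᵀ * Cdc + (2 * α) • Kdc)
        - Cdcᵀ * Cdc - (2 * α) • Kdc := by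
    rw [Matrix.transpose_sub, Matrix.sub_mul, Matrix.mul_sub, h1, h2]
    abel
  set Φ := Adcᵀ * Kdc + Kdc * Adc - Cdcᵀ * Ldcᵀ - Ldc * Cdc + Cdcᵀ * Cdc + (2 * α) • Kdc with hΦ
  have hPhi : x ⬝ᵥ (Φ *ᵥ x) ≤ 0 := by
    rcases eq_or_ne x 0 with rfl | hx
    · simp
    · have hv : Sum.elim x (0 : Fin 1 → ℝ) ≠ 0 := by
        intro h; apply hx; funext i; exact congrFun h (Sum.inl i)
      have h := Matrix.PosDef.dotProduct_mulVec_pos hLMI hv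
      rw [Matrix.fromBlocks_neg] at h
      have hm : (-((2 * α) • Kdc) + (-(Cdcᵀ * Cdc) + -(Adcᵀ * Kdc + Kdc * Adc - Cdcᵀ * Ldcᵀ - Ldc * Cdc))) = -Φ := by
        rw [hΦ]; abel
      simp only [star_trivial, Matrix.fromBlocks_mulVec, sumElim_dotProduct_sumElim,
        Matrix.mulVec_zero, Matrix.neg_mulVec, dotProduct_neg, dotProduct_zero,
        add_zero, zero_dotProduct, dotProduct_add, neg_add_rev, neg_neg,
        Sum.elim_comp_inl, Sum.elim_comp_inr, hm] at h
      linarith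
  have hCx : 0 ≤ x ⬝ᵥ ((Cdcᵀ * Cdc) *ᵥ x) := by
    rw [← Matrix.mulVec_mulVec, Matrix.dotProduct_mulVec, Matrix.vecMul_transpose]
    exact Finset.sum_nonneg fun i _ => mul_self_nonneg _
  rw [hid, Matrix.sub_mulVec, Matrix.sub_mulVec, dotProduct_sub, dotProduct_sub,
    Matrix.smul_mulVec, dotProduct_smul]
  have := hPhi
  simp only [smul_eq_mul]
  nlinarith [hCx]

local notation "⟪" x ", " y "⟫" => @inner ℝ _ _ x y

lemma inner_eq_dot (x y : EuclideanSpace ℝ (Fin 2)) :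
    ⟪x, y⟫ = (x : Fin 2 → ℝ) ⬝ᵥ (y : Fin 2 → ℝ) := by
  simp [PiLp.inner_apply, dotProduct, RCLike.inner_apply, starRingEnd_apply, mul_comm]

lemma quad_bounds (K : Matrix (Fin 2) (Fin 2) ℝ) (hK : K.PosDef) (x : EuclideanSpace ℝ (Fin 2)) :
    (⨅ i, hK.isHermitian.eigenvalues i) * ‖x‖^2 ≤ ⟪x, Matrix.toEuclideanLin K x⟫ ∧
    ⟪x, Matrix.toEuclideanLin K x⟫ ≤ (⨆ i, hK.isHermitian.eigenvalues i) * ‖x‖^2 := by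
  set hA := hK.isHermitian
  set b := hA.eigenvectorBasis with hb
  set μ := hA.eigenvalues with hμ
  have hsym : (Matrix.toEuclideanLin K).IsSymmetric := (Matrix.isHermitian_iff_isSymmetric).1 hA
  have hKb : ∀ i, Matrix.toEuclideanLin K (b i) = μ i • b i := by
    intro i
    apply (WithLp.equiv 2 (Fin 2 → ℝ)).injective
    simpa using hA.mulVec_eigenvectorBasis i
  have hc : ∀ i, ⟪b i, Matrix.toEuclideanLin K x⟫ = μ i * ⟪b i, x⟫ := by
    intro i
    rw [← hsym (b i) x, hKb i, inner_smul_left]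
    simp
  have hquad : ⟪x, Matrix.toEuclideanLin K x⟫ = ∑ i, μ i * ⟪b i, x⟫^2 := by
    rw [← b.sum_inner_mul_inner x (Matrix.toEuclideanLin K x)]
    refine Finset.sum_congr rfl fun i _ => ?_
    rw [hc i, real_inner_comm x (b i)]; ring
  have hnorm : ‖x‖^2 = ∑ i, ⟪b i, x⟫^2 := by
    rw [← real_inner_self_eq_norm_sq, ← b.sum_inner_mul_inner x x]
    refine Finset.sum_congr rfl fun i _ => ?_
    rw [real_inner_comm x (b i)]; ring
  constructor
  · rw [hquad, hnorm, Finset.mul_sum]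
    exact Finset.sum_le_sum fun i _ => mul_le_mul_of_nonneg_right
      (ciInf_le (Set.Finite.bddBelow (Set.finite_range μ)) i) (sq_nonneg _)
  · rw [hquad, hnorm, Finset.mul_sum]
    exact Finset.sum_le_sum fun i _ => mul_le_mul_of_nonneg_right
      (le_ciSup (Set.Finite.bddAbove (Set.finite_range μ)) i) (sq_nonneg _)


lemma quad_split (K A : Matrix (Fin 2) (Fin 2) ℝ) (x y : EuclideanSpace ℝ (Fin 2))
    (hy : y = (WithLp.equiv 2 (Fin 2 → ℝ)).symm (A *ᵥ x)) :
    (inner ℝ x ((LinearMap.toContinuousLinearMap (Matrix.toEuclideanLin K)) y)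
      + inner ℝ y ((LinearMap.toContinuousLinearMap (Matrix.toEuclideanLin K)) x) : ℝ)
    = x ⬝ᵥ ((Aᵀ * K + K * A) *ᵥ x) := by
  have hT : ∀ y : EuclideanSpace ℝ (Fin 2),
      ((LinearMap.toContinuousLinearMap (Matrix.toEuclideanLin K)) y : Fin 2 → ℝ) = K *ᵥ y :=
    fun _ => rfl
  subst hy
  rw [inner_eq_dot, inner_eq_dot, hT, hT]
  have h2 : (x : Fin 2 → ℝ) ⬝ᵥ ((Aᵀ*K) *ᵥ (x : Fin 2 → ℝ))
      = (A *ᵥ (x : Fin 2 → ℝ)) ⬝ᵥ (K *ᵥ (x : Fin 2 → ℝ)) := by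
    rw [← Matrix.mulVec_mulVec, Matrix.dotProduct_mulVec, Matrix.vecMul_transpose]
  show (x : Fin 2 → ℝ) ⬝ᵥ (K *ᵥ (A *ᵥ (x : Fin 2 → ℝ)))
      + (A *ᵥ (x : Fin 2 → ℝ)) ⬝ᵥ (K *ᵥ (x : Fin 2 → ℝ)) = _
  rw [Matrix.add_mulVec, dotProduct_add, Matrix.mulVec_mulVec, h2]
  ring


/-- under the observer LMI, every differentiable solution of the
error dynamics obeys the exponential bound
`‖e(t)‖ ≤ √(λ_max(K_dc)/λ_min(K_dc)) e^{−αt} ‖e(0)‖` for `t ≥ 0`. -/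
theorem observer_error_exponential_bound
    (Kdc : Matrix (Fin 2) (Fin 2) ℝ) (hK : Kdc.PosDef)
    (Ldc : Matrix (Fin 2) (Fin 1) ℝ) (α ν : ℝ) (hα : 0 < α) (hν : 0 < ν)
    (hLMI : ObserverLMI Kdc Ldc α ν)
    (e : ℝ → EuclideanSpace ℝ (Fin 2))
    (hdiff : Differentiable ℝ e)
    (hode : ∀ t ≥ (0:ℝ), deriv e t = (Adc - Kdc⁻¹ * Ldc * Cdc) *ᵥ (e t)) :
    ∀ t ≥ (0:ℝ), ‖e t‖ ≤
      Real.sqrt ((⨆ i, hK.isHermitian.eigenvalues i) / (⨅ i, hK.isHermitian.eigenvalues i)) *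
        Real.exp (-α * t) * ‖e 0‖ := by
  intro t ht
  set Acl := Adc - Kdc⁻¹ * Ldc * Cdc with hAcl
  set μ := hK.isHermitian.eigenvalues with hμ
  set lmin := ⨅ i, μ i with hlmin'
  set lmax := ⨆ i, μ i with hlmax'
  have hμpos : ∀ i, 0 < μ i := fun i => hK.eigenvalues_pos i
  have hlmin : 0 < lmin := by
    obtain ⟨i, hi⟩ := exists_eq_ciInf_of_finite (f := μ)
    rw [hlmin', ← hi]; exact hμpos i
  have hlmax : 0 < lmax :=
    lt_of_lt_of_le (hμpos 0) (le_ciSup (Set.Finite.bddAbove (Set.finite_range μ)) 0)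
  set T := LinearMap.toContinuousLinearMap (Matrix.toEuclideanLin Kdc) with hTdef
  have hTapp : ∀ y, T y = Matrix.toEuclideanLin Kdc y := fun y => rfl
  set V : ℝ → ℝ := fun s => ⟪e s, T (e s)⟫ with hV
  have hVd : ∀ s, HasDerivAt V (⟪e s, T (deriv e s)⟫ + ⟪deriv e s, T (e s)⟫) s := by
    intro s
    exact HasDerivAt.inner ℝ (hdiff s).hasDerivAt
      (T.hasFDerivAt.comp_hasDerivAt s (hdiff s).hasDerivAt)
  have hVdiff : Differentiable ℝ V := fun s => (hVd s).differentiableAt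
  have hVdot : ∀ s, V s = (e s : Fin 2 → ℝ) ⬝ᵥ (Kdc *ᵥ (e s : Fin 2 → ℝ)) := by
    intro s; rw [hV]; simp only; rw [inner_eq_dot, hTapp]; rfl
  have hderiv_le : ∀ s ≥ (0:ℝ), deriv V s ≤ -(2*α) * V s := by
    intro s hs
    have hq := quad_split Kdc Acl (e s) (deriv e s) (by rw [← hode s hs]; rfl)
    rw [(hVd s).deriv, hq, hVdot s]
    exact key_quad Kdc hK Ldc α ν hLMI _
  set W : ℝ → ℝ := fun s => Real.exp (2*α*s) * V s with hW
  have hWd : ∀ s, HasDerivAt W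
      (2*α*Real.exp (2*α*s) * V s + Real.exp (2*α*s) * deriv V s) s := by
    intro s
    have h1 : HasDerivAt (fun u => Real.exp (2*α*u)) (2*α*Real.exp (2*α*s)) s := by
      have := ((hasDerivAt_id s).const_mul (2*α)).exp
      simpa [mul_comm] using this
    exact h1.mul ((hVdiff s).hasDerivAt)
  have hanti : AntitoneOn W (Set.Ici (0:ℝ)) := by
    apply antitoneOn_of_deriv_nonpos (convex_Ici 0)
    · exact ((Real.continuous_exp.comp (continuous_const.mul continuous_id)).mul
        hVdiff.continuous).continuousOn
    · exact fun s _ => ((hWd s).differentiableAt).differentiableWithinAt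
    · intro s hs
      rw [interior_Ici] at hs
      rw [(hWd s).deriv]
      have hd := hderiv_le s (le_of_lt hs)
      have hexp : 0 < Real.exp (2*α*s) := Real.exp_pos _
      nlinarith
  have hWt : W t ≤ W 0 := hanti (Set.self_mem_Ici) ht ht
  have hW0 : W 0 = V 0 := by simp [hW]
  have hb1 := (quad_bounds Kdc hK (e t)).1
  have hb2 := (quad_bounds Kdc hK (e 0)).2
  rw [← hTapp] at hb1 hb2
  have hVt : lmin * ‖e t‖^2 ≤ V t := hb1
  have hV0 : V 0 ≤ lmax * ‖e 0‖^2 := hb2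
  have hexp2 : (0:ℝ) < Real.exp (2*α*t) := Real.exp_pos _
  have hsq : ‖e t‖^2 ≤ (lmax/lmin) * (Real.exp (-α*t))^2 * ‖e 0‖^2 := by
    have hWt' : Real.exp (2*α*t) * V t ≤ V 0 := by
      have : W t ≤ V 0 := hW0 ▸ hWt
      simpa [hW] using this
    have he : (Real.exp (-α*t))^2 = (Real.exp (2*α*t))⁻¹ := by
      rw [sq, ← Real.exp_add, ← Real.exp_neg]
      congr 1; ring
    have h3 : lmin * ‖e t‖^2 ≤ (Real.exp (2*α*t))⁻¹ * (lmax * ‖e 0‖^2) := by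
      calc lmin * ‖e t‖^2 ≤ V t := hVt
        _ = (Real.exp (2*α*t))⁻¹ * (Real.exp (2*α*t) * V t) := by field_simp
        _ ≤ (Real.exp (2*α*t))⁻¹ * V 0 :=
            mul_le_mul_of_nonneg_left hWt' (le_of_lt (inv_pos.2 hexp2))
        _ ≤ (Real.exp (2*α*t))⁻¹ * (lmax * ‖e 0‖^2) :=
            mul_le_mul_of_nonneg_left hV0 (le_of_lt (inv_pos.2 hexp2))
    have h4 : ‖e t‖^2 ≤ ((Real.exp (2*α*t))⁻¹ * (lmax * ‖e 0‖^2)) / lmin :=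
      (le_div_iff₀' hlmin).2 h3
    calc ‖e t‖^2 ≤ _ := h4
      _ = (lmax/lmin) * (Real.exp (-α*t))^2 * ‖e 0‖^2 := by rw [he]; ring
  have h5 : ‖e t‖ ≤ Real.sqrt ((lmax/lmin) * (Real.exp (-α*t))^2 * ‖e 0‖^2) := by
    rw [← Real.sqrt_sq (norm_nonneg (e t))]
    exact Real.sqrt_le_sqrt hsq
  calc ‖e t‖ ≤ _ := h5
    _ = Real.sqrt (lmax/lmin) * Real.exp (-α*t) * ‖e 0‖ := by
        rw [show (lmax/lmin) * (Real.exp (-α*t))^2 * ‖e 0‖^2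
            = (lmax/lmin) * (Real.exp (-α*t) * ‖e 0‖)^2 by ring,
          Real.sqrt_mul (by positivity), Real.sqrt_sq (by positivity), ← mul_assoc]
end
end

section
/- Let K_dc ∈ ℝ^{2×2} be symmetric positive definite, L_dc ∈ ℝ^{2×1}, and α > 0, ν > 0 be such that the observer LMI holds. Let g : ℝ → ℝ be continuous and let e : ℝ → ℝ² be differentiable with e'(t) = (A_dc − K_dc⁻¹ L_dc C_dc) e(t) + B_ξ g(t) for all t ≥ 0. Then for every t ≥ 0 at which (e(t), g(t)) ≠ (0, 0), the pointwise dissipation inequality d/dt (e(t)ᵀ K_dc e(t)) + 2α e(t)ᵀ K_dc e(t) + (C_dc e(t))² − ν g(t)² < 0 holds. -/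
open Matrix

noncomputable section

/-- under the observer LMI, the driven error dynamics satisfy the
pointwise dissipation inequality
`d/dt (e(t)ᵀK_dc e(t)) + 2α e(t)ᵀK_dc e(t) + (C_dc e(t))² − ν g(t)² < 0`
at every `t ≥ 0` with `(e(t), g(t)) ≠ (0,0)`. -/
theorem observer_pointwise_dissipation
    (Kdc : Matrix (Fin 2) (Fin 2) ℝ) (hK : Kdc.PosDef)
    (Ldc : Matrix (Fin 2) (Fin 1) ℝ) (α ν : ℝ) (hα : 0 < α) (hν : 0 < ν)
    (hLMI : ObserverLMI Kdc Ldc α ν)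
    (g : ℝ → ℝ) (hg : Continuous g)
    (e : ℝ → EuclideanSpace ℝ (Fin 2))
    (hdiff : Differentiable ℝ e)
    (hode : ∀ t ≥ (0:ℝ), deriv e t =
      (Adc - Kdc⁻¹ * Ldc * Cdc) *ᵥ (e t) + Bxi *ᵥ (fun _ => g t)) :
    ∀ t ≥ (0:ℝ), ¬(e t = 0 ∧ g t = 0) →
      deriv (fun s => (e s) ⬝ᵥ (Kdc *ᵥ (e s))) t
        + 2 * α * ((e t) ⬝ᵥ (Kdc *ᵥ (e t)))
        + (e t 0) ^ 2 - ν * (g t) ^ 2 < 0 := by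
  intro t ht hne
  -- abbreviations
  have he : HasDerivAt e (deriv e t) t := (hdiff t).hasDerivAt
  set w := deriv e t with hw
  have h0 : HasDerivAt (fun s => e s 0) (w 0) t := by
    have := ((EuclideanSpace.proj (0:Fin 2) : EuclideanSpace ℝ (Fin 2) →L[ℝ] ℝ).hasFDerivAt.comp t he.hasFDerivAt).hasDerivAt
    simp [Function.comp, w] at this
    exact this
  have h1 : HasDerivAt (fun s => e s 1) (w 1) t := by
    have := ((EuclideanSpace.proj (1:Fin 2) : EuclideanSpace ℝ (Fin 2) →L[ℝ] ℝ).hasFDerivAt.comp t he.hasFDerivAt).hasDerivAt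
    simp [Function.comp, w] at this
    exact this
  set y := Kdc⁻¹ * Ldc with hy
  have hdet : IsUnit Kdc.det := isUnit_iff_ne_zero.mpr hK.det_pos.ne'
  have hKy : Kdc * y = Ldc := by
    rw [hy, ← Matrix.mul_assoc, Matrix.mul_nonsing_inv _ hdet, Matrix.one_mul]
  have hy0 : Kdc 0 0 * y 0 0 + Kdc 0 1 * y 1 0 = Ldc 0 0 := by
    have := congrFun (congrFun hKy 0) 0
    simpa [Matrix.mul_apply, Fin.sum_univ_two] using this
  have hy1 : Kdc 1 0 * y 0 0 + Kdc 1 1 * y 1 0 = Ldc 1 0 := by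
    have := congrFun (congrFun hKy 1) 0
    simpa [Matrix.mul_apply, Fin.sum_univ_two] using this
  have hsym : Kdc 1 0 = Kdc 0 1 := by
    have := congrFun (congrFun hK.1.eq 1) 0
    simpa [Matrix.conjTranspose_apply] using this.symm
  have hw0 : w 0 = e t 1 - y 0 0 * e t 0 := by
    have := congrFun (hode t ht) 0
    rw [← hw] at this
    simp [Matrix.mulVec, Matrix.mul_apply, dotProduct, Fin.sum_univ_two, Fin.sum_univ_one,
      Adc, Bxi, Cdc, Matrix.sub_apply] at this
    linarith [this]
  have hw1 : w 1 = g t - y 1 0 * e t 0 := by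
    have := congrFun (hode t ht) 1
    rw [← hw] at this
    simp [Matrix.mulVec, Matrix.mul_apply, dotProduct, Fin.sum_univ_two, Fin.sum_univ_one,
      Adc, Bxi, Cdc, Matrix.sub_apply] at this
    linarith [this]
  have base := (h0.mul ((h0.const_mul (Kdc 0 0)).add (h1.const_mul (Kdc 0 1)))).add
      (h1.mul ((h0.const_mul (Kdc 1 0)).add (h1.const_mul (Kdc 1 1))))
  have hfun : (fun s => (e s) ⬝ᵥ (Kdc *ᵥ (e s)))
      = (fun s => e s 0 * (Kdc 0 0 * e s 0 + Kdc 0 1 * e s 1)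
          + e s 1 * (Kdc 1 0 * e s 0 + Kdc 1 1 * e s 1)) := by
    funext s
    simp [dotProduct, Matrix.mulVec, Fin.sum_univ_two]
  have hderiv : deriv (fun s => (e s) ⬝ᵥ (Kdc *ᵥ (e s))) t
      = w 0 * (Kdc 0 0 * e t 0 + Kdc 0 1 * e t 1)
        + e t 0 * (Kdc 0 0 * w 0 + Kdc 0 1 * w 1)
        + (w 1 * (Kdc 1 0 * e t 0 + Kdc 1 1 * e t 1)
        + e t 1 * (Kdc 1 0 * w 0 + Kdc 1 1 * w 1)) := by
    rw [hfun]
    exact base.deriv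
  have hquad : (e t) ⬝ᵥ (Kdc *ᵥ (e t))
      = e t 0 * (Kdc 0 0 * e t 0 + Kdc 0 1 * e t 1)
        + e t 1 * (Kdc 1 0 * e t 0 + Kdc 1 1 * e t 1) := by
    simp [dotProduct, Matrix.mulVec, Fin.sum_univ_two]
  set z : Fin 2 ⊕ Fin 1 → ℝ := Sum.elim (fun i => e t i) (fun _ => g t) with hzdef
  have hz : z ≠ 0 := by
    intro h
    apply hne
    constructor
    · ext i
      exact congrFun h (Sum.inl i)
    · exact congrFun h (Sum.inr 0)
  have hM := Matrix.PosDef.dotProduct_mulVec_pos hLMI hz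
  simp only [star_trivial, Matrix.neg_mulVec, dotProduct_neg] at hM
  simp [hzdef, dotProduct, Matrix.mulVec, Matrix.mul_apply, Matrix.fromBlocks,
    Fintype.sum_sum_type, Fin.sum_univ_two, Fin.sum_univ_one, Adc, Bxi, Cdc,
    Matrix.transpose_apply, Matrix.vecHead, Matrix.vecTail] at hM
  rw [hsym] at hM hy1 hderiv hquad
  rw [hderiv, hquad, hw0, hw1]
  have e1 : (e t 0)^2 * (Kdc 0 0 * y 0 0 + Kdc 0 1 * y 1 0) = (e t 0)^2 * Ldc 0 0 := by
    rw [hy0]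
  have e2 : (e t 0 * e t 1) * (Kdc 0 1 * y 0 0 + Kdc 1 1 * y 1 0)
      = (e t 0 * e t 1) * Ldc 1 0 := by rw [hy1]
  nlinarith [hM, e1, e2]
end
end
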